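/- Let f be holomorphic on the horizontal strip Ω = {z ∈ ℂ : |Im z| ≤ 2w} for some w > 0, and suppose that for every k ∈ ℕ there is a constant M_k > 0 with |f(z) z^k| ≤ M_k for all z ∈ Ω. Then for every k ∈ ℕ there exists p_k > 0 such that the k-th derivative of the Fourier transform of f (restricted to ℝ) satisfies |f̂^(k)(s)| ≤ p_k · exp(−w·|s|) for all s ∈ ℝ. -/

import Mathlib

open MeasureTheory Complex Filter Topology Real FourierTransform

lemma contour_shift (G : ℂ → ℂ) (w y C : ℝ) (hy : |y| ≤ 2 * w)
    (Hd : DifferentiableOn ℂ G {z : ℂ | |z.im| ≤ 2 * w})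
    (hC : ∀ z : ℂ, |z.im| ≤ 2 * w → ‖G z‖ ≤ C / (1 + z.re ^ 2)) :
    (∫ x : ℝ, G (x + y * Complex.I)) = ∫ x : ℝ, G x := by
  have hw0 : 0 ≤ 2 * w := le_trans (abs_nonneg y) hy
  have hyy := abs_le.mp hy
  have hmem : ∀ (x c : ℝ), |c| ≤ 2 * w → ((x : ℂ) + c * Complex.I) ∈ {z : ℂ | |z.im| ≤ 2 * w} := by
    intro x c hc
    simp [Set.mem_setOf_eq, hc]
  have hcont : ∀ c : ℝ, |c| ≤ 2 * w → Continuous (fun x : ℝ => G (x + c * Complex.I)) := by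
    intro c hc
    exact Hd.continuousOn.comp_continuous (by continuity) (fun x => hmem x c hc)
  have hint : ∀ c : ℝ, |c| ≤ 2 * w → Integrable (fun x : ℝ => G (x + c * Complex.I)) := by
    intro c hc
    refine (integrable_inv_one_add_sq.const_mul C).mono'
      ((hcont c hc).aestronglyMeasurable) (Filter.Eventually.of_forall fun x => ?_)
    have := hC ((x : ℂ) + c * Complex.I) (by simpa using hc)
    simpa [div_eq_mul_inv] using this
  -- rectangle identity
  have key : ∀ T : ℝ,
      (∫ x : ℝ in (-T)..T, G x) - (∫ x : ℝ in (-T)..T, G (x + y * Complex.I))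
        = Complex.I * (∫ t : ℝ in (0:ℝ)..y, G ((-T : ℝ) + t * Complex.I))
          - Complex.I * (∫ t : ℝ in (0:ℝ)..y, G ((T : ℝ) + t * Complex.I)) := by
    intro T
    have hsub : Set.uIcc (((-T : ℝ) : ℂ)).re ((((T : ℝ) : ℂ)) + y * Complex.I).re ×ℂ
        Set.uIcc (((-T : ℝ) : ℂ)).im ((((T : ℝ) : ℂ)) + y * Complex.I).im
        ⊆ {z : ℂ | |z.im| ≤ 2 * w} := by
      intro z' hz'
      have h2 := (Complex.mem_reProdIm.mp hz').2
      simp only [Complex.ofReal_im, Complex.add_im, Complex.ofReal_re, Complex.mul_im,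
        Complex.I_im, Complex.I_re, mul_zero, mul_one, zero_add, zero_mul, add_zero] at h2
      rcases Set.mem_uIcc.mp h2 with ⟨h3, h4⟩ | ⟨h3, h4⟩ <;>
        · simp only [Set.mem_setOf_eq, abs_le]; constructor <;> linarith
    have h := Complex.integral_boundary_rect_eq_zero_of_differentiableOn G
      ((-T : ℝ) : ℂ) (((T : ℝ) : ℂ) + y * Complex.I) (Hd.mono hsub)
    simp only [Complex.ofReal_re, Complex.ofReal_im, Complex.add_re, Complex.add_im,
      Complex.mul_re, Complex.mul_im, Complex.I_re, Complex.I_im, mul_zero, mul_one,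
      zero_mul, zero_add, add_zero, sub_zero, zero_sub, Complex.ofReal_zero,
      smul_eq_mul] at h
    linear_combination h
  -- vertical integrals tend to zero
  have habs : ∀ t ∈ Set.uIoc (0:ℝ) y, |t| ≤ 2 * w := by
    intro t ht
    rcases Set.mem_uIoc.mp ht with ⟨h3, h4⟩ | ⟨h3, h4⟩ <;>
      · rw [abs_le]; constructor <;> linarith
  have vertbound : ∀ c : ℝ, ‖∫ t : ℝ in (0:ℝ)..y, G ((c : ℝ) + t * Complex.I)‖
      ≤ C / (1 + c ^ 2) * |y| := by
    intro c
    have := intervalIntegral.norm_integral_le_of_norm_le_const (C := C / (1 + c ^ 2))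
      (f := fun t : ℝ => G ((c : ℝ) + t * Complex.I)) (a := 0) (b := y) ?_
    · simpa using this
    · intro t ht
      have := hC ((c : ℂ) + t * Complex.I) (by simpa using habs t ht)
      simpa using this
  have hzero : Tendsto (fun T : ℝ => C / (1 + T ^ 2) * |y|) atTop (𝓝 0) := by
    have h1 : Tendsto (fun T : ℝ => 1 + T ^ 2) atTop atTop :=
      tendsto_atTop_add_const_left _ 1 (tendsto_pow_atTop two_ne_zero)
    simpa using (tendsto_const_nhds.div_atTop h1).mul_const |y|
  have hv1 : Tendsto (fun T : ℝ =>
      Complex.I * ∫ t : ℝ in (0:ℝ)..y, G ((-T : ℝ) + t * Complex.I)) atTop (𝓝 0) := by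
    apply squeeze_zero_norm _ hzero
    intro T
    calc ‖Complex.I * ∫ t : ℝ in (0:ℝ)..y, G ((-T : ℝ) + t * Complex.I)‖
        = ‖∫ t : ℝ in (0:ℝ)..y, G ((-T : ℝ) + t * Complex.I)‖ := by
          rw [norm_mul, Complex.norm_I, one_mul]
      _ ≤ C / (1 + (-T) ^ 2) * |y| := vertbound (-T)
      _ = C / (1 + T ^ 2) * |y| := by rw [neg_pow]; ring_nf
  have hv2 : Tendsto (fun T : ℝ =>
      Complex.I * ∫ t : ℝ in (0:ℝ)..y, G ((T : ℝ) + t * Complex.I)) atTop (𝓝 0) := by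
    apply squeeze_zero_norm _ hzero
    intro T
    calc ‖Complex.I * ∫ t : ℝ in (0:ℝ)..y, G ((T : ℝ) + t * Complex.I)‖
        = ‖∫ t : ℝ in (0:ℝ)..y, G ((T : ℝ) + t * Complex.I)‖ := by
          rw [norm_mul, Complex.norm_I, one_mul]
      _ ≤ C / (1 + T ^ 2) * |y| := vertbound T
  have hint0 : Integrable (fun x : ℝ => G x) := by
    have := hint 0 (by simpa using hw0)
    simpa using this
  have hA : Tendsto (fun T : ℝ => ∫ x : ℝ in (-T)..T, G x) atTop (𝓝 (∫ x : ℝ, G x)) :=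
    intervalIntegral_tendsto_integral hint0 tendsto_neg_atTop_atBot tendsto_id
  have hB : Tendsto (fun T : ℝ => ∫ x : ℝ in (-T)..T, G (x + y * Complex.I)) atTop
      (𝓝 (∫ x : ℝ, G (x + y * Complex.I))) :=
    intervalIntegral_tendsto_integral (hint y hy) tendsto_neg_atTop_atBot tendsto_id
  have hAB := hA.sub hB
  have hV : Tendsto (fun T : ℝ =>
      (∫ x : ℝ in (-T)..T, G x) - ∫ x : ℝ in (-T)..T, G (x + y * Complex.I)) atTop (𝓝 0) := by
    have := hv1.sub hv2
    rw [sub_zero] at this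
    exact Tendsto.congr (fun T => (key T).symm) this
  have := tendsto_nhds_unique hAB hV
  rw [sub_eq_zero] at this
  exact this.symm

lemma iteratedDeriv_cmul (c : ℂ) : ∀ (n : ℕ) {F : ℝ → ℂ}, ContDiff ℝ n F →
    iteratedDeriv n (fun t => c * F t) = fun t => c * iteratedDeriv n F t
  | 0, _, _ => by simp
  | (n+1), F, h => by
    funext x
    rw [iteratedDeriv_succ, iteratedDeriv_succ, iteratedDeriv_cmul c n h.of_succ]
    exact deriv_const_mul c
      ((h.differentiable_iteratedDeriv n (by exact_mod_cast n.lt_succ_self)).differentiableAt)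

lemma fourierHat_iteratedDeriv (f : ℂ → ℂ) (k : ℕ)
    (hi : ∀ n : ℕ, Integrable (fun x : ℝ => (x : ℝ) ^ n • f x)) (s : ℝ) :
    iteratedDeriv k
        (fun s : ℝ => (2 * Real.pi : ℂ)⁻¹ *
          ∫ x : ℝ, Complex.exp (-((s : ℂ) * (x : ℂ)) * Complex.I) * f x) s
      = (2 * Real.pi : ℂ)⁻¹ *
        ∫ x : ℝ, Complex.exp (-((s : ℂ) * x) * Complex.I)
          * ((-Complex.I * x) ^ k * f x) := by
  have hπ : (0:ℝ) < 2 * Real.pi := by positivity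
  have hπ' : (2 * Real.pi : ℝ) ≠ 0 := ne_of_gt hπ
  set g : ℝ → ℂ := fun x => f x with hg
  have hexp : ∀ (u x : ℝ), Complex.exp (↑(-2 * Real.pi * x * ((2 * Real.pi)⁻¹ * u)) * Complex.I)
      = Complex.exp (-((u : ℂ) * x) * Complex.I) := by
    intro u x
    congr 1
    have : (-2 * Real.pi * x * ((2 * Real.pi)⁻¹ * u) : ℝ) = -(u * x) := by
      field_simp
    rw [this]
    push_cast
    ring
  have step1 : (fun s : ℝ => (2 * Real.pi : ℂ)⁻¹ *
        ∫ x : ℝ, Complex.exp (-((s : ℂ) * (x : ℂ)) * Complex.I) * f x)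
      = fun s : ℝ => (2 * Real.pi : ℂ)⁻¹ * (𝓕 g) ((2 * Real.pi)⁻¹ * s) := by
    funext u
    rw [Real.fourier_real_eq_integral_exp_smul]
    congr 1
    apply integral_congr_ae; filter_upwards with x
    rw [smul_eq_mul, hexp u x]
  have hnormint : ∀ n : ℕ, (n : ℕ∞) ≤ (k : ℕ∞) → Integrable (fun x : ℝ => ‖x‖ ^ n * ‖g x‖) := by
    intro n _
    have := (hi n).norm
    simpa [norm_smul] using this
  have hcd : ContDiff ℝ k (𝓕 g) := Real.contDiff_fourier hnormint
  have hcd2 : ContDiff ℝ k (fun u : ℝ => (𝓕 g) ((2 * Real.pi)⁻¹ * u)) :=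
    hcd.comp (contDiff_const.mul contDiff_id)
  rw [step1, iteratedDeriv_cmul _ k hcd2, iteratedDeriv_comp_const_smul hcd,
    Real.iteratedDeriv_fourier (N := (k : ℕ∞)) (fun n _ => hi n) le_rfl]
  beta_reduce
  rw [Real.fourier_real_eq_integral_exp_smul]
  congr 1
  rw [← integral_smul]
  apply integral_congr_ae; filter_upwards with x
  rw [hexp s x]
  have hc2 : ((-Complex.I) * (x:ℂ)) ^ k
      = ((((2 * Real.pi)⁻¹ : ℝ)) : ℂ) ^ k * (-2 * (Real.pi : ℂ) * Complex.I * x) ^ k := by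
    rw [← mul_pow]
    congr 1
    have h1 : ((Real.pi : ℝ) : ℂ) ≠ 0 := by exact_mod_cast Real.pi_ne_zero
    push_cast
    field_simp
  rw [Complex.real_smul]
  simp only [smul_eq_mul]
  rw [hc2]
  push_cast
  ring

open MeasureTheory

/-- The Fourier transform normalized as `f̂(s) = (2π)⁻¹ ∫ e^{-isx} f(x) dx`,
applied to the restriction of `f : ℂ → ℂ` to the real line. -/
noncomputable def fourierHat (f : ℂ → ℂ) : ℝ → ℂ :=
  fun s => (2 * Real.pi : ℂ)⁻¹ * ∫ x : ℝ, Complex.exp (-((s : ℂ) * (x : ℂ)) * Complex.I) * f x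

/-- If `f` is holomorphic on the strip `{z : |Im z| ≤ 2w}` (`w > 0`) and for every `k`
there is `M_k > 0` with `|f(z) zᵏ| ≤ M_k` on the strip, then for every `k` there is
`p_k > 0` with `|f̂⁽ᵏ⁾(s)| ≤ p_k exp(−w|s|)` for all real `s`. -/
theorem stmt0 (f : ℂ → ℂ) (w : ℝ) (hw : 0 < w)
    (hf : DifferentiableOn ℂ f {z : ℂ | |z.im| ≤ 2 * w})
    (hbd : ∀ k : ℕ, ∃ M : ℝ, 0 < M ∧ ∀ z ∈ {z : ℂ | |z.im| ≤ 2 * w}, ‖f z * z ^ k‖ ≤ M) :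
    ∀ k : ℕ, ∃ p : ℝ, 0 < p ∧ ∀ s : ℝ,
      ‖iteratedDeriv k (fourierHat f) s‖ ≤ p * Real.exp (-w * |s|) := by
  -- decay estimate on the strip, for every power
  have hdecay : ∀ n : ℕ, ∃ D : ℝ, 0 < D ∧ ∀ z : ℂ, |z.im| ≤ 2 * w →
      ‖f z * z ^ n‖ ≤ D / (1 + z.re ^ 2) := by
    intro n
    obtain ⟨M1, hM1, hM1'⟩ := hbd n
    obtain ⟨M2, hM2, hM2'⟩ := hbd (n + 2)
    refine ⟨M1 + M2, by positivity, fun z hz => ?_⟩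
    have h1 : ‖f z * z ^ n‖ ≤ M1 := hM1' z hz
    have h2 : ‖f z * z ^ (n + 2)‖ ≤ M2 := hM2' z hz
    have hpos : (0:ℝ) < 1 + z.re ^ 2 := by positivity
    rw [le_div_iff₀ hpos]
    have hre : z.re ^ 2 * ‖f z * z ^ n‖ ≤ ‖f z * z ^ (n + 2)‖ := by
      have h3 : z.re ^ 2 ≤ ‖z‖ ^ 2 := by
        rw [Complex.sq_norm, Complex.normSq_apply]
        nlinarith [sq_nonneg z.im]
      calc z.re ^ 2 * ‖f z * z ^ n‖ ≤ ‖z‖ ^ 2 * ‖f z * z ^ n‖ :=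
            mul_le_mul_of_nonneg_right h3 (norm_nonneg _)
        _ = ‖f z * z ^ (n + 2)‖ := by
            rw [norm_mul, norm_mul, norm_pow, norm_pow]
            ring
    nlinarith [norm_nonneg (f z * z ^ n)]
  -- continuity of f on the real line
  have hcontf : Continuous fun x : ℝ => f x := by
    refine hf.continuousOn.comp_continuous Complex.continuous_ofReal fun x => ?_
    simp [Set.mem_setOf_eq]
    positivity
  -- integrability of x^n • f x
  have hi : ∀ n : ℕ, Integrable (fun x : ℝ => (x : ℝ) ^ n • f x) := by
    intro n
    obtain ⟨D, hD, hD'⟩ := hdecay n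
    refine (integrable_inv_one_add_sq.const_mul D).mono'
      ((continuous_pow n).smul hcontf).aestronglyMeasurable
      (Filter.Eventually.of_forall fun x => ?_)
    have := hD' x (by simp; positivity)
    rw [norm_smul]
    simp only [Complex.ofReal_re] at this
    calc ‖(x:ℝ)^n‖ * ‖f x‖ = ‖f x * (x:ℂ) ^ n‖ := by
          simp only [norm_mul, norm_pow, Complex.norm_real]
          ring
      _ ≤ D / (1 + x ^ 2) := this
      _ = D * (1 + x ^ 2)⁻¹ := by rw [div_eq_mul_inv]
  intro k
  obtain ⟨D, hD, hD'⟩ := hdecay k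
  refine ⟨D / 2, by positivity, fun s => ?_⟩
  rw [show fourierHat f = (fun s : ℝ => (2 * Real.pi : ℂ)⁻¹ *
      ∫ x : ℝ, Complex.exp (-((s : ℂ) * (x : ℂ)) * Complex.I) * f x) from rfl,
    fourierHat_iteratedDeriv f k hi s]
  set G : ℂ → ℂ := fun z => Complex.exp (-((s:ℂ) * z) * Complex.I) * ((-Complex.I * z) ^ k * f z)
    with hG
  -- norm of G
  have hGnorm : ∀ z : ℂ, ‖G z‖ = Real.exp (s * z.im) * ‖f z * z ^ k‖ := by
    intro z
    rw [hG]
    simp only [norm_mul, Complex.norm_exp]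
    have hre : (-((s:ℂ) * z) * Complex.I).re = s * z.im := by
      simp [Complex.mul_re, Complex.mul_im]
    rw [hre]
    simp only [norm_pow, norm_mul, norm_neg, Complex.norm_I, one_mul]
    ring
  -- differentiability of G on the strip
  have hGd : DifferentiableOn ℂ G {z : ℂ | |z.im| ≤ 2 * w} := by
    apply DifferentiableOn.mul
    · apply Differentiable.differentiableOn
      apply Differentiable.cexp
      exact (((differentiable_const _).mul differentiable_id).neg.mul (differentiable_const _))
    · exact (((differentiable_const _).mul differentiable_id).pow k).differentiableOn.mul hf
  -- choose the shift
  set y : ℝ := if 0 ≤ s then -w else w with hy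
  have hyabs : |y| ≤ 2 * w := by
    have h1 : |y| = w := by
      rw [hy]; split_ifs <;> simp [abs_of_pos hw]
    rw [h1]; linarith
  have hsy : s * y = -w * |s| := by
    rw [hy]
    split_ifs with h
    · rw [_root_.abs_of_nonneg h]; ring
    · rw [abs_of_neg (lt_of_not_ge h)]; ring
  -- bound for the contour shift
  have hCG : ∀ z : ℂ, |z.im| ≤ 2 * w →
      ‖G z‖ ≤ Real.exp (2 * w * |s|) * D / (1 + z.re ^ 2) := by
    intro z hz
    rw [hGnorm z]
    have h1 : Real.exp (s * z.im) ≤ Real.exp (2 * w * |s|) := by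
      apply Real.exp_le_exp.mpr
      calc s * z.im ≤ |s * z.im| := le_abs_self _
        _ = |s| * |z.im| := abs_mul s z.im
        _ ≤ |s| * (2 * w) := by
            apply mul_le_mul_of_nonneg_left hz (abs_nonneg s)
        _ = 2 * w * |s| := by ring
    calc Real.exp (s * z.im) * ‖f z * z ^ k‖
        ≤ Real.exp (2 * w * |s|) * (D / (1 + z.re ^ 2)) := by
          apply mul_le_mul h1 (hD' z hz) (norm_nonneg _) (le_of_lt (Real.exp_pos _))
      _ = Real.exp (2 * w * |s|) * D / (1 + z.re ^ 2) := by ring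
  rw [← contour_shift G w y (Real.exp (2 * w * |s|) * D) hyabs hGd hCG]
  -- final estimate
  rw [norm_mul]
  have hnorm2pi : ‖(2 * Real.pi : ℂ)⁻¹‖ = (2 * Real.pi)⁻¹ := by
    rw [norm_inv]
    congr 1
    have h2 : (2 * Real.pi : ℂ) = ((2 * Real.pi : ℝ) : ℂ) := by push_cast; ring
    rw [h2, Complex.norm_real, Real.norm_eq_abs, _root_.abs_of_pos (by positivity)]
  have hintbound : ‖∫ x : ℝ, G (x + y * Complex.I)‖
      ≤ Real.exp (-w * |s|) * D * Real.pi := by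
    have hb : ∀ x : ℝ, ‖G (x + y * Complex.I)‖
        ≤ Real.exp (-w * |s|) * D * (1 + x ^ 2)⁻¹ := by
      intro x
      have him : ((x:ℂ) + y * Complex.I).im = y := by simp
      have hre2 : ((x:ℂ) + y * Complex.I).re = x := by simp
      rw [hGnorm, him, hsy]
      have := hD' ((x:ℂ) + y * Complex.I) (by rw [him]; exact hyabs)
      rw [hre2] at this
      calc Real.exp (-w * |s|) * ‖f ((x:ℂ) + y * Complex.I) * ((x:ℂ) + y * Complex.I) ^ k‖
          ≤ Real.exp (-w * |s|) * (D / (1 + x ^ 2)) :=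
            mul_le_mul_of_nonneg_left this (le_of_lt (Real.exp_pos _))
        _ = Real.exp (-w * |s|) * D * (1 + x ^ 2)⁻¹ := by rw [div_eq_mul_inv]; ring
    calc ‖∫ x : ℝ, G (x + y * Complex.I)‖
        ≤ ∫ x : ℝ, Real.exp (-w * |s|) * D * (1 + x ^ 2)⁻¹ :=
          norm_integral_le_of_norm_le
            ((integrable_inv_one_add_sq.const_mul _))
            (Filter.Eventually.of_forall hb)
      _ = Real.exp (-w * |s|) * D * Real.pi := by
          rw [integral_const_mul, integral_univ_inv_one_add_sq]
  calc ‖(2 * Real.pi : ℂ)⁻¹‖ * ‖∫ x : ℝ, G (x + y * Complex.I)‖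
      ≤ (2 * Real.pi)⁻¹ * (Real.exp (-w * |s|) * D * Real.pi) := by
        rw [hnorm2pi]
        exact mul_le_mul_of_nonneg_left hintbound (by positivity)
    _ = D / 2 * Real.exp (-w * |s|) := by
        field_simp
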